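/- For the balanced wheel network (k ≥ 3 with weights 1 on rim edges and -2 sin(π/k) on spokes), the linear map ȧ ↦ D_a F_{(Id,a)}(ȧ) = (∑_{q∈V_p} ȧ_{[p,q]}(q-p)/|q-p|)_p from ℝ^{2k} to ℂ^{k+1} has rank 2k - 1; equivalently its kernel is one-dimensional, spanned by a. -/

import Mathlib

theorem wheel_weight_differential_kernel
    (k : ℕ) (hk : 3 ≤ k) [NeZero k]
    (ξ : ℂ) (hξ : ξ = Complex.exp (2 * Real.pi * Complex.I / k))
    (w : ZMod k → ℂ) (hw : ∀ j : ZMod k, w j = ξ ^ (j.val)) :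
    ∀ (as ar : ZMod k → ℝ),
      ((∑ j : ZMod k, (as j : ℂ) * (w j - 0) / (‖w j - 0‖ : ℂ) = 0)
        ∧ (∀ j : ZMod k,
            (as j : ℂ) * (0 - w j) / (‖0 - w j‖ : ℂ)
              + (ar j : ℂ) * (w (j + 1) - w j) /
                  (‖w (j + 1) - w j‖ : ℂ)
              + (ar (j - 1) : ℂ) * (w (j - 1) - w j) /
                  (‖w (j - 1) - w j‖ : ℂ) = 0))
      ↔ ∃ c : ℝ, (∀ j, as j = c * (-2 * Real.sin (Real.pi / k)))
          ∧ (∀ j, ar j = c * 1) := by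
  intro as ar
  have hk0 : 0 < k := by omega
  have hkR : (0:ℝ) < k := by exact_mod_cast hk0
  have hkC : (k:ℂ) ≠ 0 := by exact_mod_cast hk0.ne'
  set θ : ℝ := Real.pi / k with hθ
  set s : ℝ := Real.sin θ with hsdef
  set c : ℝ := Real.cos θ with hcdef
  have hθpos : 0 < θ := div_pos Real.pi_pos hkR
  have hθlt : θ < Real.pi / 2 := by
    rw [hθ]
    apply div_lt_div_of_pos_left Real.pi_pos (by norm_num)
    exact_mod_cast by omega
  have hθltpi : θ < Real.pi := lt_trans hθlt (by linarith [Real.pi_pos])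
  have hs : 0 < s := Real.sin_pos_of_pos_of_lt_pi hθpos hθltpi
  have hc : 0 < c := Real.cos_pos_of_mem_Ioo ⟨by linarith, hθlt⟩
  have hsC : (s:ℂ) ≠ 0 := by exact_mod_cast hs.ne'
  -- ξ in trigonometric form
  have hξre : ξ = (Real.cos (2*θ) : ℂ) + (Real.sin (2*θ) : ℂ) * Complex.I := by
    rw [hξ]
    have h1 : 2 * (Real.pi:ℂ) * Complex.I / k = ((2*θ : ℝ):ℂ) * Complex.I := by
      push_cast [hθ]
      field_simp
    rw [h1, Complex.exp_mul_I, Complex.ofReal_cos, Complex.ofReal_sin]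
  have habsξ : ‖ξ‖ = 1 := by
    rw [hξre, Complex.norm_def, Complex.normSq_add_mul_I, Real.cos_sq_add_sin_sq]
    exact Real.sqrt_one
  have hξ0 : ξ ≠ 0 := by
    intro h; rw [h] at habsξ; simp at habsξ
  have hξk : ξ ^ k = 1 := by
    rw [hξ, ← Complex.exp_nat_mul]
    have : (k:ℂ) * (2 * Real.pi * Complex.I / k) = 2 * Real.pi * Complex.I := by
      field_simp
    rw [this, Complex.exp_two_pi_mul_I]
  have hξne1 : ξ ≠ 1 := by
    intro h
    have h2 := hξre.symm.trans h
    have him : Real.sin (2*θ) = 0 := by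
      have h3 := congrArg Complex.im h2
      simp only [Complex.add_im, Complex.ofReal_im, Complex.mul_im, Complex.I_im,
        Complex.I_re, Complex.ofReal_re, Complex.one_im] at h3
      linarith
    have : 0 < Real.sin (2*θ) := by
      apply Real.sin_pos_of_pos_of_lt_pi (by linarith)
      linarith
    linarith
  -- trig identities
  have hcos2 : Real.cos (2*θ) = 1 - 2*s^2 := by
    have h1 := Real.sin_sq_add_cos_sq θ
    have h2 := Real.cos_two_mul θ
    rw [hsdef]; nlinarith
  have hsin2 : Real.sin (2*θ) = 2*s*c := Real.sin_two_mul θ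
  have hfac : ξ - 1 = ((2*s:ℝ):ℂ) * (((-s:ℝ):ℂ) + ((c:ℝ):ℂ) * Complex.I) := by
    rw [hξre, hcos2, hsin2]; push_cast; ring
  have hξinv : ξ⁻¹ = (Real.cos (2*θ) : ℂ) - (Real.sin (2*θ) : ℂ) * Complex.I := by
    have hm : ξ * ((Real.cos (2*θ) : ℂ) - (Real.sin (2*θ) : ℂ) * Complex.I) = 1 := by
      rw [hξre]
      have h1 : ((Real.sin (2*θ):ℝ):ℂ)^2 + ((Real.cos (2*θ):ℝ):ℂ)^2 = 1 := by
        exact_mod_cast Real.sin_sq_add_cos_sq (2*θ)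
      linear_combination h1 - ((Real.sin (2*θ):ℝ):ℂ)^2 * Complex.I_sq
    exact (eq_inv_of_mul_eq_one_left (by linear_combination hm)).symm
  have hfac' : ξ⁻¹ - 1 = ((2*s:ℝ):ℂ) * (((-s:ℝ):ℂ) - ((c:ℝ):ℂ) * Complex.I) := by
    rw [hξinv, hcos2, hsin2]; push_cast; ring
  -- w facts
  have habsw : ∀ j, ‖w j‖ = 1 := by
    intro j; rw [hw, norm_pow, habsξ, one_pow]
  have hw0 : ∀ j, w j ≠ 0 := by
    intro j h; have := habsw j; rw [h] at this; simp at this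
  have hpow : ∀ m : ℕ, ξ ^ (m % k) = ξ ^ m := by
    intro m
    conv_rhs => rw [← Nat.mod_add_div m k]
    rw [pow_add, pow_mul, hξk, one_pow, mul_one]
  have hwmul : ∀ j, w (j + 1) = ξ * w j := by
    intro j
    haveI : Fact (1 < k) := ⟨by omega⟩
    rw [hw, hw, ZMod.val_add, ZMod.val_one, hpow, pow_succ]
    ring
  have hwprev : ∀ j, w (j - 1) = ξ⁻¹ * w j := by
    intro j
    have := hwmul (j - 1)
    rw [sub_add_cancel] at this
    rw [this]; field_simp
  -- edges
  have hedge1 : ∀ j, w (j + 1) - w j = w j * (((2*s:ℝ):ℂ) * (((-s:ℝ):ℂ) + ((c:ℝ):ℂ) * Complex.I)) := by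
    intro j; rw [hwmul, ← hfac]; ring
  have hedge2 : ∀ j, w (j - 1) - w j = w j * (((2*s:ℝ):ℂ) * (((-s:ℝ):ℂ) - ((c:ℝ):ℂ) * Complex.I)) := by
    intro j; rw [hwprev, ← hfac']
    field_simp
  have habsu1 : ‖((-s:ℝ):ℂ) + ((c:ℝ):ℂ) * Complex.I‖ = 1 := by
    rw [Complex.norm_def, Complex.normSq_add_mul_I]
    rw [show (-s)^2 + c^2 = 1 by nlinarith [Real.sin_sq_add_cos_sq θ]]
    exact Real.sqrt_one
  have habsu2 : ‖((-s:ℝ):ℂ) - ((c:ℝ):ℂ) * Complex.I‖ = 1 := by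
    rw [show ((-s:ℝ):ℂ) - ((c:ℝ):ℂ) * Complex.I = ((-s:ℝ):ℂ) + ((-c:ℝ):ℂ) * Complex.I by push_cast; ring]
    rw [Complex.norm_def, Complex.normSq_add_mul_I]
    rw [show (-s)^2 + (-c)^2 = 1 by nlinarith [Real.sin_sq_add_cos_sq θ]]
    exact Real.sqrt_one
  have habs1 : ∀ j, ‖w (j + 1) - w j‖ = 2*s := by
    intro j; rw [hedge1, norm_mul, norm_mul, habsw, habsu1, Complex.norm_real, Real.norm_eq_abs,
      abs_of_pos (by linarith)]
    ring
  have habs2 : ∀ j, ‖w (j - 1) - w j‖ = 2*s := by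
    intro j; rw [hedge2, norm_mul, norm_mul, habsw, habsu2, Complex.norm_real, Real.norm_eq_abs,
      abs_of_pos (by linarith)]
    ring
  -- key factorization of the vertex expression
  have key : ∀ j : ZMod k,
      (as j : ℂ) * (0 - w j) / (‖0 - w j‖ : ℂ)
        + (ar j : ℂ) * (w (j + 1) - w j) / (‖w (j + 1) - w j‖ : ℂ)
        + (ar (j - 1) : ℂ) * (w (j - 1) - w j) / (‖w (j - 1) - w j‖ : ℂ)
      = w j * ((-(as j) : ℂ) + (ar j : ℂ) * (((-s:ℝ):ℂ) + ((c:ℝ):ℂ) * Complex.I)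
          + (ar (j-1) : ℂ) * (((-s:ℝ):ℂ) - ((c:ℝ):ℂ) * Complex.I)) := by
    intro j
    rw [habs1, habs2, zero_sub, norm_neg, habsw, hedge1, hedge2]
    push_cast
    field_simp
  -- sum of all w j is zero
  have hshift : ∑ j : ZMod k, w (j + 1) = ∑ j : ZMod k, w j :=
    Fintype.sum_equiv (Equiv.addRight 1) _ _ (fun j => rfl)
  have hsum : ∑ j : ZMod k, w j = 0 := by
    have h0 : (ξ - 1) * ∑ j : ZMod k, w j = 0 := by
      rw [Finset.mul_sum]
      have : ∀ j : ZMod k, (ξ - 1) * w j = w (j + 1) - w j := by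
        intro j; rw [hwmul]; ring
      rw [Finset.sum_congr rfl (fun j _ => this j), Finset.sum_sub_distrib, hshift, sub_self]
    exact (mul_eq_zero.mp h0).resolve_left (sub_ne_zero.mpr hξne1)
  constructor
  · rintro ⟨-, hv⟩
    -- extract real/imaginary conditions from each vertex equation
    have hre_im : ∀ j : ZMod k, ar j = ar (j - 1) ∧ as j = -s * (ar j + ar (j-1)) := by
      intro j
      have h1 := hv j
      rw [key j] at h1
      have h2 : (-(as j : ℂ)) + (ar j : ℂ) * (((-s:ℝ):ℂ) + ((c:ℝ):ℂ) * Complex.I)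
          + (ar (j-1) : ℂ) * (((-s:ℝ):ℂ) - ((c:ℝ):ℂ) * Complex.I) = 0 :=
        (mul_eq_zero.mp h1).resolve_left (hw0 j)
      rw [Complex.ext_iff] at h2
      obtain ⟨hre, him⟩ := h2
      simp [Complex.add_im, Complex.add_re, Complex.mul_re, Complex.mul_im] at hre him
      constructor
      · have : c * (ar j - ar (j-1)) = 0 := by linarith
        have := (mul_eq_zero.mp this).resolve_left hc.ne'
        linarith
      · linarith
    have harconst : ∀ j : ZMod k, ar j = ar 0 := by
      have step : ∀ n : ℕ, ar ((n : ZMod k)) = ar 0 := by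
        intro n
        induction n with
        | zero => simp
        | succ n ih =>
          have h1 := (hre_im ((n+1 : ℕ) : ZMod k)).1
          have h2 : ((n+1 : ℕ) : ZMod k) - 1 = ((n:ℕ) : ZMod k) := by push_cast; ring
          rw [h1, h2, ih]
      intro j
      have := step j.val
      rwa [ZMod.natCast_val, ZMod.cast_id] at this
    refine ⟨ar 0, fun j => ?_, fun j => by rw [harconst j]; ring⟩
    have := (hre_im j).2
    rw [harconst j, harconst (j-1)] at this
    rw [this]; ring
  · rintro ⟨c0, has, har⟩
    constructor
    · have : ∀ j : ZMod k, (as j : ℂ) * (w j - 0) / (‖w j - 0‖ : ℂ)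
          = ((c0 * (-2*s) : ℝ) : ℂ) * w j := by
        intro j
        rw [sub_zero, habsw, has j]
        norm_num
      rw [Finset.sum_congr rfl (fun j _ => this j), ← Finset.mul_sum, hsum, mul_zero]
    · intro j
      rw [key j, has j, har j, har (j-1)]
      apply mul_eq_zero_of_right
      push_cast
      ring
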